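/- Let λ > 0, μ = √(λ²+1), and define X : ℝ² → ℝ³ by X(u,v) = ( λ·u + cosh u·sin v , (1/2)·((μ − λ)·(sinh²u + cosh²u)·sin v·cos v + 2·sinh u·cos v − (μ + λ)·v) , cosh u·cos v·((μ − λ)·sinh u·sin v + 1) ). Then: (i) each coordinate function of X is harmonic on ℝ² (∂²X_k/∂u² + ∂²X_k/∂v² = 0); (ii) X is Lorentz-conformal, i.e. ⟨X_u,X_u⟩_L = ⟨X_v,X_v⟩_L and ⟨X_u,X_v⟩_L = 0 everywhere; and (iii) X(u,0) = (λ·u, sinh u, cosh u) for all u ∈ ℝ. -/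

import Mathlib

open Real

/-- Lorentzian inner product on ℝ³: ⟨p,q⟩ = p₁q₁ + p₂q₂ − p₃q₃. -/
noncomputable def lorentz (p q : ℝ × ℝ × ℝ) : ℝ :=
  p.1 * q.1 + p.2.1 * q.2.1 - p.2.2 * q.2.2

/-- First coordinate of the helicoidal helicoid over a helix of type II, case a = 1. -/
noncomputable def X1 (lam mu u v : ℝ) : ℝ :=
  lam * u + cosh u * sin v

/-- Second coordinate of the helicoidal helicoid over a helix of type II, case a = 1. -/
noncomputable def X2 (lam mu u v : ℝ) : ℝ :=
  (1/2) * ((mu - lam) * (sinh u ^ 2 + cosh u ^ 2) * sin v * cos v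
    + 2 * sinh u * cos v - (mu + lam) * v)

/-- Third coordinate of the helicoidal helicoid over a helix of type II, case a = 1. -/
noncomputable def X3 (lam mu u v : ℝ) : ℝ :=
  cosh u * cos v * ((mu - lam) * sinh u * sin v + 1)

/-- Partial derivative of X with respect to u. -/
noncomputable def Xu (lam mu u v : ℝ) : ℝ × ℝ × ℝ :=
  (deriv (fun s => X1 lam mu s v) u, deriv (fun s => X2 lam mu s v) u,
   deriv (fun s => X3 lam mu s v) u)

/-- Partial derivative of X with respect to v. -/
noncomputable def Xv (lam mu u v : ℝ) : ℝ × ℝ × ℝ :=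
  (deriv (fun t => X1 lam mu u t) v, deriv (fun t => X2 lam mu u t) v,
   deriv (fun t => X3 lam mu u t) v)


section Aux

open Real

lemma hX1u (lam mu u v : ℝ) :
    HasDerivAt (fun s => X1 lam mu s v) (lam + sinh u * sin v) u := by
  have h := ((hasDerivAt_id' (x := u)).const_mul lam).add
    ((Real.hasDerivAt_cosh u).mul_const (sin v))
  simp only [X1]
  convert h using 1
  all_goals first | rfl | ring

lemma hX1v (lam mu u v : ℝ) :
    HasDerivAt (fun t => X1 lam mu u t) (cosh u * cos v) v := by
  have h := ((Real.hasDerivAt_sin v).const_mul (cosh u)).const_add (lam * u)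
  simp only [X1]
  convert h using 1
  all_goals first | rfl | ring

lemma hX2u (lam mu u v : ℝ) :
    HasDerivAt (fun s => X2 lam mu s v)
      (2*(mu-lam)*(sin v*cos v)*(sinh u*cosh u) + cosh u*cos v) u := by
  have h := (((((((Real.hasDerivAt_sinh u).pow 2).add
      ((Real.hasDerivAt_cosh u).pow 2)).const_mul (mu-lam)).mul_const
      (sin v)).mul_const (cos v)).add
      (((Real.hasDerivAt_sinh u).const_mul 2).mul_const (cos v))).sub_const
      ((mu+lam)*v)
  have h2 := h.const_mul (1/2 : ℝ)
  simp only [X2]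
  convert h2 using 1
  all_goals first | rfl | (push_cast; ring)

lemma hX2v (lam mu u v : ℝ) :
    HasDerivAt (fun t => X2 lam mu u t)
      ((1/2)*(mu-lam)*(sinh u*sinh u + cosh u*cosh u)*(cos v*cos v)
        - (1/2)*(mu-lam)*(sinh u*sinh u + cosh u*cosh u)*(sin v*sin v)
        - sinh u*sin v - (1/2)*(mu+lam)) v := by
  have h := (((((Real.hasDerivAt_sin v).const_mul
      ((mu-lam)*(sinh u^2+cosh u^2))).mul (Real.hasDerivAt_cos v)).add
      ((Real.hasDerivAt_cos v).const_mul (2*sinh u))).sub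
      ((hasDerivAt_id' (x := v)).const_mul (mu+lam))).const_mul (1/2 : ℝ)
  simp only [X2]
  convert h using 1
  all_goals first | rfl | ring

lemma hX3u (lam mu u v : ℝ) :
    HasDerivAt (fun s => X3 lam mu s v)
      ((mu-lam)*(sin v*cos v)*(sinh u*sinh u + cosh u*cosh u) + sinh u*cos v) u := by
  have h := ((Real.hasDerivAt_cosh u).mul_const (cos v)).mul
    ((((Real.hasDerivAt_sinh u).const_mul (mu-lam)).mul_const (sin v)).add_const 1)
  simp only [X3]
  convert h using 1
  all_goals first | rfl | ring

lemma hX3v (lam mu u v : ℝ) :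
    HasDerivAt (fun t => X3 lam mu u t)
      ((mu-lam)*(sinh u*cosh u)*(cos v*cos v)
        - (mu-lam)*(sinh u*cosh u)*(sin v*sin v) - cosh u*sin v) v := by
  have h := ((Real.hasDerivAt_cos v).const_mul (cosh u)).mul
    (((Real.hasDerivAt_sin v).const_mul ((mu-lam)*sinh u)).add_const 1)
  simp only [X3]
  convert h using 1
  all_goals first | rfl | ring

lemma dX1u (lam mu v : ℝ) :
    deriv (fun s => X1 lam mu s v) = fun u => lam + sinh u * sin v :=
  funext fun u => (hX1u lam mu u v).deriv

lemma dX1v (lam mu u : ℝ) :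
    deriv (fun t => X1 lam mu u t) = fun v => cosh u * cos v :=
  funext fun v => (hX1v lam mu u v).deriv

lemma dX2u (lam mu v : ℝ) :
    deriv (fun s => X2 lam mu s v)
      = fun u => 2*(mu-lam)*(sin v*cos v)*(sinh u*cosh u) + cosh u*cos v :=
  funext fun u => (hX2u lam mu u v).deriv

lemma dX2v (lam mu u : ℝ) :
    deriv (fun t => X2 lam mu u t)
      = fun v => (1/2)*(mu-lam)*(sinh u*sinh u + cosh u*cosh u)*(cos v*cos v)
        - (1/2)*(mu-lam)*(sinh u*sinh u + cosh u*cosh u)*(sin v*sin v)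
        - sinh u*sin v - (1/2)*(mu+lam) :=
  funext fun v => (hX2v lam mu u v).deriv

lemma dX3u (lam mu v : ℝ) :
    deriv (fun s => X3 lam mu s v)
      = fun u => (mu-lam)*(sin v*cos v)*(sinh u*sinh u + cosh u*cosh u) + sinh u*cos v :=
  funext fun u => (hX3u lam mu u v).deriv

lemma dX3v (lam mu u : ℝ) :
    deriv (fun t => X3 lam mu u t)
      = fun v => (mu-lam)*(sinh u*cosh u)*(cos v*cos v)
        - (mu-lam)*(sinh u*cosh u)*(sin v*sin v) - cosh u*sin v :=
  funext fun v => (hX3v lam mu u v).deriv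

lemma hX1uu (lam v u : ℝ) :
    HasDerivAt (fun u => lam + sinh u * sin v) (cosh u * sin v) u :=
  ((Real.hasDerivAt_sinh u).mul_const (sin v)).const_add lam

lemma hX1vv (u v : ℝ) :
    HasDerivAt (fun v => cosh u * cos v) (cosh u * (-sin v)) v :=
  (Real.hasDerivAt_cos v).const_mul (cosh u)

lemma hX2uu (lam mu v u : ℝ) :
    HasDerivAt (fun u => 2*(mu-lam)*(sin v*cos v)*(sinh u*cosh u) + cosh u*cos v)
      (2*(mu-lam)*(sin v*cos v)*(cosh u*cosh u + sinh u*sinh u) + sinh u*cos v) u :=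
  (((Real.hasDerivAt_sinh u).mul (Real.hasDerivAt_cosh u)).const_mul
    (2*(mu-lam)*(sin v*cos v))).add ((Real.hasDerivAt_cosh u).mul_const (cos v))

lemma hX2vv (lam mu u v : ℝ) :
    HasDerivAt (fun v => (1/2)*(mu-lam)*(sinh u*sinh u + cosh u*cosh u)*(cos v*cos v)
        - (1/2)*(mu-lam)*(sinh u*sinh u + cosh u*cosh u)*(sin v*sin v)
        - sinh u*sin v - (1/2)*(mu+lam))
      ((1/2)*(mu-lam)*(sinh u*sinh u + cosh u*cosh u)*(-sin v*cos v + cos v*(-sin v))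
        - (1/2)*(mu-lam)*(sinh u*sinh u + cosh u*cosh u)*(cos v*sin v + sin v*cos v)
        - sinh u*cos v) v := by
  have h := (((((Real.hasDerivAt_cos v).mul (Real.hasDerivAt_cos v)).const_mul
      ((1/2)*(mu-lam)*(sinh u*sinh u + cosh u*cosh u))).sub
      (((Real.hasDerivAt_sin v).mul (Real.hasDerivAt_sin v)).const_mul
      ((1/2)*(mu-lam)*(sinh u*sinh u + cosh u*cosh u)))).sub
      ((Real.hasDerivAt_sin v).const_mul (sinh u))).sub_const ((1/2)*(mu+lam))
  convert h using 1
  all_goals first | rfl | ring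

lemma hX3uu (lam mu v u : ℝ) :
    HasDerivAt (fun u => (mu-lam)*(sin v*cos v)*(sinh u*sinh u + cosh u*cosh u) + sinh u*cos v)
      ((mu-lam)*(sin v*cos v)*((cosh u*sinh u + sinh u*cosh u)
        + (sinh u*cosh u + cosh u*sinh u)) + cosh u*cos v) u :=
  ((((Real.hasDerivAt_sinh u).mul (Real.hasDerivAt_sinh u)).add
    ((Real.hasDerivAt_cosh u).mul (Real.hasDerivAt_cosh u))).const_mul
    ((mu-lam)*(sin v*cos v))).add ((Real.hasDerivAt_sinh u).mul_const (cos v))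

lemma hX3vv (lam mu u v : ℝ) :
    HasDerivAt (fun v => (mu-lam)*(sinh u*cosh u)*(cos v*cos v)
        - (mu-lam)*(sinh u*cosh u)*(sin v*sin v) - cosh u*sin v)
      ((mu-lam)*(sinh u*cosh u)*(-sin v*cos v + cos v*(-sin v))
        - (mu-lam)*(sinh u*cosh u)*(cos v*sin v + sin v*cos v) - cosh u*cos v) v := by
  have h := ((((Real.hasDerivAt_cos v).mul (Real.hasDerivAt_cos v)).const_mul
      ((mu-lam)*(sinh u*cosh u))).sub
      (((Real.hasDerivAt_sin v).mul (Real.hasDerivAt_sin v)).const_mul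
      ((mu-lam)*(sinh u*cosh u)))).sub ((Real.hasDerivAt_sin v).const_mul (cosh u))
  convert h using 1
  all_goals first | rfl | ring

end Aux

/-- The helicoidal helicoid over a helix of type II with a = 1 is harmonic,
Lorentz-conformal, and contains the helix (λu, sinh u, cosh u). -/
theorem helicoidal_helicoid_spacelike_typeII_a_eq_one (lam mu : ℝ)
    (hlam : 0 < lam) (hmu : mu = Real.sqrt (lam^2 + 1)) :
    (∀ u v : ℝ,
      deriv (deriv (fun s => X1 lam mu s v)) u + deriv (deriv (fun t => X1 lam mu u t)) v = 0 ∧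
      deriv (deriv (fun s => X2 lam mu s v)) u + deriv (deriv (fun t => X2 lam mu u t)) v = 0 ∧
      deriv (deriv (fun s => X3 lam mu s v)) u + deriv (deriv (fun t => X3 lam mu u t)) v = 0) ∧
    (∀ u v : ℝ,
      lorentz (Xu lam mu u v) (Xu lam mu u v) = lorentz (Xv lam mu u v) (Xv lam mu u v) ∧
      lorentz (Xu lam mu u v) (Xv lam mu u v) = 0) ∧
    (∀ u : ℝ, (X1 lam mu u 0, X2 lam mu u 0, X3 lam mu u 0) = (lam * u, sinh u, cosh u)) := by
  have hm : mu ^ 2 = lam ^ 2 + 1 := by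
    rw [hmu]
    exact Real.sq_sqrt (by positivity)
  refine ⟨fun u v => ?_, fun u v => ?_, fun u => ?_⟩
  · rw [dX1u, dX1v, dX2u, dX2v, dX3u, dX3v,
      (hX1uu lam v u).deriv, (hX1vv u v).deriv, (hX2uu lam mu v u).deriv,
      (hX2vv lam mu u v).deriv, (hX3uu lam mu v u).deriv, (hX3vv lam mu u v).deriv]
    refine ⟨by ring, by ring, by ring⟩
  · have hc : Real.cosh u ^ 2 - Real.sinh u ^ 2 = 1 := Real.cosh_sq_sub_sinh_sq u
    have hS : Real.sin v ^ 2 + Real.cos v ^ 2 = 1 := Real.sin_sq_add_cos_sq v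
    simp only [lorentz, Xu, Xv, (hX1u lam mu u v).deriv, (hX1v lam mu u v).deriv,
      (hX2u lam mu u v).deriv, (hX2v lam mu u v).deriv,
      (hX3u lam mu u v).deriv, (hX3v lam mu u v).deriv]
    constructor
    · linear_combination
        ((1/2:ℝ)*Real.sinh u^2*Real.sin v^2*Real.cos v^2*mu^2 + (-1:ℝ)*Real.sinh u^2*Real.sin v^2*Real.cos v^2*lam*mu + Real.sinh u*Real.sin v*Real.cos v^2*mu + (1/2:ℝ)*Real.sinh u^2*Real.sin v^2*Real.cos v^2*lam^2 + (-1:ℝ)*Real.sinh u*Real.sin v*Real.cos v^2*lam + (-1/2:ℝ)*Real.cosh u^2*Real.sin v^2*Real.cos v^2*mu^2 + Real.cosh u^2*Real.sin v^2*Real.cos v^2*lam*mu + (-1/2:ℝ)*Real.cosh u^2*Real.sin v^2*Real.cos v^2*lam^2 + (1/4:ℝ)*Real.sinh u^2*Real.cos v^4*mu^2 + (-1/2:ℝ)*Real.sinh u^2*Real.cos v^4*lam*mu + (1/4:ℝ)*Real.sinh u^2*Real.sin v^4*mu^2 + (-1/2:ℝ)*Real.sinh u^2*Real.sin v^4*lam*mu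 + (-1/4:ℝ)*Real.cosh u^2*Real.cos v^4*mu^2 + (1/2:ℝ)*Real.cosh u^2*Real.cos v^4*lam*mu + (1/2:ℝ)*Real.cos v^2*mu^2 + (-1/4:ℝ)*Real.cosh u^2*Real.sin v^4*mu^2 + (1/2:ℝ)*Real.cosh u^2*Real.sin v^4*lam*mu + Real.sinh u*Real.sin v^3*mu + (-1/2:ℝ)*Real.sin v^2*mu^2 + (1/4:ℝ)*Real.sinh u^2*Real.cos v^4*lam^2 + (1/4:ℝ)*Real.sinh u^2*Real.sin v^4*lam^2 + (-1/4:ℝ)*Real.cosh u^2*Real.cos v^4*lam^2 + (-1/2:ℝ)*Real.cos v^2*lam^2 + (-1/4:ℝ)*Real.cosh u^2*Real.sin v^4*lam^2 + (-1:ℝ)*Real.sinh u*Real.sin v^3*lam + (1/2:ℝ)*Real.sin v^2*lam^2 + Real.sin v^2 + (-1/2:ℝ)*Real.sin v^2*Real.cos v^2*mu^2 + Real.sin v^2*Real.cos v^2*lam*mu + (-1/2:ℝ)*Real.sin v^2*Real.cos v^2*lam^2 + (-1/4:ℝ)*Real.cos v^4*mu^2 + (1/2:ℝ)*Real.cos v^4*lam*mu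 + (-1/4:ℝ)*Real.sin v^4*mu^2 + (1/2:ℝ)*Real.sin v^4*lam*mu + (-1/4:ℝ)*Real.cos v^4*lam^2 + (-1/4:ℝ)*Real.sin v^4*lam^2) * hc + ((-1:ℝ)*Real.sinh u^2 + Real.sinh u^2*mu^2 + (-1:ℝ)*Real.sinh u^2*lam^2 + Real.sinh u*Real.sin v*mu + (-1:ℝ)*Real.sinh u*Real.sin v*lam + (1/4:ℝ)*mu^2 + (-3/4:ℝ)*lam^2 + (-1/4:ℝ)*Real.sin v^2*mu^2 + (1/2:ℝ)*Real.sin v^2*lam*mu + (-1/4:ℝ)*Real.sin v^2*lam^2 + (-1/4:ℝ)*Real.cos v^2*mu^2 + (1/2:ℝ)*Real.cos v^2*lam*mu + (-1/4:ℝ)*Real.cos v^2*lam^2 + (1/2:ℝ)*lam*mu) * hS + ((-2:ℝ)*Real.sinh u^2*Real.sin v^2 + Real.sinh u^2 + (-1:ℝ)*Real.sin v^2) * hm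
    · linear_combination
        ((1/2:ℝ)*Real.cosh u*Real.cos v^3*mu + (1/2:ℝ)*Real.cosh u*Real.sin v^2*Real.cos v*mu + (-1/2:ℝ)*Real.cosh u*Real.cos v^3*lam + (-1/2:ℝ)*Real.cosh u*Real.sin v^2*Real.cos v*lam) * hc + ((1/2:ℝ)*Real.cosh u*Real.cos v*mu + (-1/2:ℝ)*Real.cosh u*Real.cos v*lam) * hS + ((-1:ℝ)*Real.sinh u*Real.cosh u*Real.sin v*Real.cos v) * hm
  · simp only [X1, X2, X3, Real.sin_zero, Real.cos_zero, Prod.mk.injEq]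
    refine ⟨by ring, by ring, by ring⟩
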